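/- arXiv:2005.00139 — 4 statements merged into one kernel-verified Lean document; each statement's English description precedes it below -/
import Mathlib

section
/- Let X be a vertex-transitive graph on n vertices. Then the product of the maximum size of an independent set (coclique) of X and the maximum size of a clique of X is at most n. -/
open Finset

/-- Clique-coclique bound: in a vertex-transitive graph `G` on a finite vertex
set `V`, the product of the size of any independent set (coclique) and the size
of any clique is at most `|V|`; in particular `α(G)·ω(G) ≤ |V|`. -/
theorem clique_coclique_bound {V : Type*} [Fintype V] (G : SimpleGraph V)
    (hvt : ∀ u v : V, ∃ e : G ≃g G, e u = v)
    (I C : Finset V)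
    (hI : Gᶜ.IsClique (I : Set V))  -- `I` is an independent set of `G`
    (hC : G.IsClique (C : Set V)) :
    I.card * C.card ≤ Fintype.card V := by
  classical
  rcases C.eq_empty_or_nonempty with rfl | ⟨c₀, hc₀⟩
  · simp
  haveI : Fintype (G ≃g G) :=
    Fintype.ofInjective (fun e => (e : V ≃ V)) (fun a b h => by
      cases a; cases b; simp only [RelIso.mk.injEq]; exact h)
  -- stabilizer size
  set s : V → ℕ := fun v => (univ.filter (fun g : G ≃g G => g v = v)).card with hs
  -- fiber cardinality
  have hfib : ∀ u v : V, (univ.filter (fun g : G ≃g G => g u = v)).card = s u := by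
    intro u v
    obtain ⟨e, he⟩ := hvt u v
    apply Finset.card_nbij' (fun g => g.trans e.symm) (fun h => h.trans e)
    · intro g hg
      simp only [mem_coe, mem_filter, mem_univ, true_and] at hg ⊢
      simp [hg, ← he]
    · intro h hh
      simp only [mem_coe, mem_filter, mem_univ, true_and] at hh ⊢
      simp [hh, he]
    · intro g _
      exact RelIso.ext (fun x => by simp)
    · intro h _
      exact RelIso.ext (fun x => by simp)
  have htot : ∀ u : V, Fintype.card (G ≃g G) = Fintype.card V * s u := by
    intro u
    have h := Finset.card_eq_sum_card_fiberwise
      (f := fun g : G ≃g G => g u) (s := univ) (t := univ) (fun x _ => mem_univ _)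
    rw [← Finset.card_univ, h]
    simp only [hfib]
    rw [Finset.sum_const, smul_eq_mul, Finset.card_univ]
  have hscst : ∀ c : V, s c = s c₀ := by
    intro c
    have h1 := htot c
    have h2 := htot c₀
    have hpos : 0 < Fintype.card V := Fintype.card_pos_iff.mpr ⟨c₀⟩
    exact Nat.eq_of_mul_eq_mul_left hpos (h1 ▸ h2 ▸ rfl)
  have hspos : 0 < s c₀ := by
    apply Finset.card_pos.mpr
    exact ⟨RelIso.refl _, by simp⟩
  -- per-automorphism bound
  have hone : ∀ g : G ≃g G, (C.filter (fun c => g c ∈ I)).card ≤ 1 := by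
    intro g
    apply Finset.card_le_one.mpr
    intro a ha b hb
    simp only [mem_filter] at ha hb
    by_contra hab
    have hadj : G.Adj a b := hC ha.1 hb.1 hab
    have hadj' : G.Adj (g a) (g b) := g.map_adj_iff.mpr hadj
    have hne : g a ≠ g b := fun h => hab (g.injective h)
    have := hI ha.2 hb.2 hne
    rw [SimpleGraph.compl_adj] at this
    exact this.2 hadj'
  -- the double count
  have hsum : ∑ g : G ≃g G, (C.filter (fun c => g c ∈ I)).card
      = C.card * (I.card * s c₀) := by
    have step1 : ∀ g : G ≃g G, (C.filter (fun c => g c ∈ I)).card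
        = ∑ c ∈ C, if g c ∈ I then 1 else 0 := by
      intro g; rw [Finset.card_filter]
    calc ∑ g : G ≃g G, (C.filter (fun c => g c ∈ I)).card
        = ∑ g : G ≃g G, ∑ c ∈ C, if g c ∈ I then 1 else 0 := by
          simp only [step1]
      _ = ∑ c ∈ C, ∑ g : G ≃g G, if g c ∈ I then 1 else 0 := Finset.sum_comm
      _ = ∑ c ∈ C, (univ.filter (fun g : G ≃g G => g c ∈ I)).card :=
          Finset.sum_congr rfl fun c _ => (Finset.card_filter _ _).symm
      _ = ∑ c ∈ C, I.card * s c₀ := by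
          apply Finset.sum_congr rfl
          intro c hcC
          have hfw := Finset.card_eq_sum_card_fiberwise
            (f := fun g : G ≃g G => g c) (s := univ.filter (fun g : G ≃g G => g c ∈ I))
            (t := I) (fun g hg => (mem_filter.mp hg).2)
          rw [hfw]
          have : ∀ i ∈ I, ((univ.filter (fun g : G ≃g G => g c ∈ I)).filter
              (fun g => g c = i)).card = s c := by
            intro i hi
            rw [Finset.filter_filter]
            rw [← hfib c i]
            congr 1
            apply Finset.filter_congr
            intro g _
            constructor
            · exact fun h => h.2
            · exact fun h => ⟨h ▸ hi, h⟩
          rw [Finset.sum_congr rfl this]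
          simp [hscst c]
      _ = C.card * (I.card * s c₀) := by rw [Finset.sum_const, smul_eq_mul]
  have hle : ∑ g : G ≃g G, (C.filter (fun c => g c ∈ I)).card ≤ Fintype.card (G ≃g G) := by
    calc ∑ g : G ≃g G, (C.filter (fun c => g c ∈ I)).card
        ≤ ∑ _g : G ≃g G, 1 := Finset.sum_le_sum (fun g _ => hone g)
      _ = Fintype.card (G ≃g G) := by simp
  rw [hsum, htot c₀] at hle
  have h2 : I.card * C.card * s c₀ ≤ Fintype.card V * s c₀ := by
    rw [mul_comm I.card C.card, mul_assoc]; exact hle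
  exact Nat.le_of_mul_le_mul_right h2 hspos
end

section
/- Let X be a graph on v vertices and A a real symmetric weighted adjacency matrix for X (A[i,j] = 0 whenever i and j are non-adjacent) with constant row and column sum d. If the least eigenvalue of A is τ, then every independent set S of X satisfies |S| ≤ v/(1 − d/τ). -/
open Matrix in
lemma quad_lower_aux_wrb {V : Type*} [Fintype V] [DecidableEq V] (A : Matrix V V ℝ)
    (hA : A.IsHermitian) (τ : ℝ) (hτ : ∀ i, τ ≤ hA.eigenvalues i) (z : V → ℝ) :
    τ * (z ⬝ᵥ z) ≤ z ⬝ᵥ (A *ᵥ z) := by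
  classical
  set U : Matrix V V ℝ := (hA.eigenvectorUnitary : Matrix V V ℝ) with hU
  have hUU : U * star U = 1 := (Matrix.mem_unitaryGroup_iff).mp hA.eigenvectorUnitary.2
  have hstar : star U = Uᵀ := by
    ext i j; simp [Matrix.star_eq_conjTranspose, Matrix.conjTranspose_apply]
  have hUUT : U * Uᵀ = 1 := by rw [← hstar]; exact hUU
  set w : V → ℝ := star U *ᵥ z with hw
  have hvm : z ᵥ* U = w := by
    rw [hw, hstar, Matrix.mulVec_transpose]
  have hzw : z ⬝ᵥ z = w ⬝ᵥ w := by
    have h1 : w ⬝ᵥ w = z ⬝ᵥ z := by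
      rw [hw, hstar, Matrix.dotProduct_mulVec, Matrix.vecMul_transpose,
        Matrix.mulVec_mulVec, hUUT, Matrix.one_mulVec, dotProduct_comm]
    exact h1.symm
  have hAz : z ⬝ᵥ (A *ᵥ z) = ∑ i, hA.eigenvalues i * (w i)^2 := by
    conv_lhs => rw [hA.spectral_theorem, Unitary.conjStarAlgAut_apply]
    rw [← hU, ← Matrix.mulVec_mulVec, ← Matrix.mulVec_mulVec, Matrix.dotProduct_mulVec, hvm,
      ← hw]
    simp [Matrix.mulVec_diagonal, dotProduct]
    exact Finset.sum_congr rfl fun i _ => by ring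
  rw [hAz, hzw, dotProduct, Finset.mul_sum]
  apply Finset.sum_le_sum
  intro i _
  have := hτ i
  nlinarith [sq_nonneg (w i)]

open Matrix

/-- Weighted ratio bound: let `A` be a real symmetric weighted adjacency matrix
for a graph `G` on `v` vertices (`A i j = 0` whenever `i` and `j` are
non-adjacent), with all row sums equal to `d`, and least eigenvalue `τ`, with
`τ < 0 < d`.  Then any independent set `S` satisfies `|S| ≤ v / (1 - d/τ)`. -/
theorem weighted_ratio_bound {V : Type*} [Fintype V] [DecidableEq V]
    (G : SimpleGraph V) (A : Matrix V V ℝ) (d τ : ℝ)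
    (hsym : A.IsSymm)
    (hA0 : ∀ i j : V, ¬ G.Adj i j → A i j = 0)
    (hrow : ∀ i : V, ∑ j : V, A i j = d)
    (hτeig : ∃ x : V → ℝ, x ≠ 0 ∧ A.mulVec x = τ • x)
    (hτmin : ∀ (μ : ℝ) (x : V → ℝ), x ≠ 0 → A.mulVec x = μ • x → τ ≤ μ)
    (hτneg : τ < 0) (hd : 0 < d)
    (S : Finset V) (hS : ∀ i ∈ S, ∀ j ∈ S, ¬ G.Adj i j) :
    (S.card : ℝ) ≤ (Fintype.card V : ℝ) / (1 - d / τ) := by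
  classical
  -- A is Hermitian
  have hA : A.IsHermitian := by
    rw [Matrix.IsHermitian]
    ext i j
    rw [Matrix.conjTranspose_apply]
    simp [hsym.apply i j]
  -- τ is at most every eigenvalue
  have hτ : ∀ i, τ ≤ hA.eigenvalues i := by
    intro i
    refine hτmin _ (hA.eigenvectorBasis i) ?_ (hA.mulVec_eigenvectorBasis i)
    have hne := hA.eigenvectorBasis.orthonormal.ne_zero i
    intro h
    exact hne (by ext j; exact congrFun h j)
  -- V is nonempty
  have hne : Nonempty V := by
    obtain ⟨x0, hx0, _⟩ := hτeig
    rcases isEmpty_or_nonempty V with hE | hN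
    · exact absurd (funext fun i => (hE.false i).elim) hx0
    · exact hN
  set n : ℝ := (Fintype.card V : ℝ) with hn_def
  have hn : 0 < n := by
    rw [hn_def]
    exact_mod_cast Fintype.card_pos (α := V)
  have hn0 : n ≠ 0 := ne_of_gt hn
  set s : ℝ := (S.card : ℝ) with hs_def
  have hs0 : 0 ≤ s := by positivity
  set x : V → ℝ := fun i => if i ∈ S then 1 else 0 with hx_def
  set c : ℝ := s / n with hc_def
  set z : V → ℝ := fun i => x i - c with hz_def
  -- independence: x ⬝ᵥ A x = 0
  have hxAx : x ⬝ᵥ (A *ᵥ x) = 0 := by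
    rw [dotProduct]
    apply Finset.sum_eq_zero
    intro i _
    by_cases hi : i ∈ S
    · have : (A *ᵥ x) i = 0 := by
        rw [Matrix.mulVec, dotProduct]
        apply Finset.sum_eq_zero
        intro j _
        by_cases hj : j ∈ S
        · rw [hA0 i j (hS i hi j hj)]; ring
        · simp [hx_def, hj]
      rw [this]; ring
    · simp [hx_def, hi]
  have hsum_x : ∑ i, x i = s := by
    simp [hx_def, hs_def]
  have hsum_x2 : ∑ i, x i * x i = s := by
    rw [← hsum_x]
    exact Finset.sum_congr rfl fun i _ => by by_cases hi : i ∈ S <;> simp [hx_def, hi]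
  have hcol : ∀ j, ∑ i, A i j = d := by
    intro j
    calc ∑ i, A i j = ∑ i, A j i := Finset.sum_congr rfl fun i _ => hsym.apply j i
    _ = d := hrow j
  have hsum_Ax : ∑ i, (A *ᵥ x) i = d * s := by
    simp only [Matrix.mulVec, dotProduct]
    rw [Finset.sum_comm]
    calc ∑ j, ∑ i, A i j * x j = ∑ j, (∑ i, A i j) * x j := by
          simp [Finset.sum_mul]
    _ = ∑ j, d * x j := Finset.sum_congr rfl fun j _ => by rw [hcol j]
    _ = d * s := by rw [← Finset.mul_sum, hsum_x]
  have hAzk : ∀ i, (A *ᵥ z) i = (A *ᵥ x) i - c * d := by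
    intro i
    simp only [Matrix.mulVec, dotProduct, hz_def]
    rw [show (∑ j, A i j * (x j - c)) = (∑ j, A i j * x j) - (∑ j, A i j) * c by
      rw [Finset.sum_mul, ← Finset.sum_sub_distrib]; exact Finset.sum_congr rfl fun j _ => by ring]
    rw [hrow i]; ring
  have hzAz : z ⬝ᵥ (A *ᵥ z) = -(s^2 * d) / n := by
    have h1 : z ⬝ᵥ (A *ᵥ z)
        = ∑ i, (x i * (A *ᵥ x) i - c * d * x i - c * (A *ᵥ x) i + c * (c * d)) := by
      rw [dotProduct]
      refine Finset.sum_congr rfl fun i _ => ?_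
      rw [hAzk i]
      show (x i - c) * ((A *ᵥ x) i - c * d) = _
      ring
    rw [h1]
    rw [Finset.sum_add_distrib, Finset.sum_sub_distrib, Finset.sum_sub_distrib,
      ← Finset.mul_sum, ← Finset.mul_sum, Finset.sum_const, nsmul_eq_mul]
    rw [show (∑ i, x i * (A *ᵥ x) i) = x ⬝ᵥ (A *ᵥ x) from rfl, hxAx, hsum_x, hsum_Ax]
    rw [hc_def]
    field_simp
    rw [Finset.card_univ, ← hn_def]
    ring
  have hzz : z ⬝ᵥ z = s - s^2 / n := by
    rw [dotProduct]
    have h1 : ∑ i, z i * z i = ∑ i, (x i * x i - 2 * c * x i + c * c) := by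
      refine Finset.sum_congr rfl fun i _ => ?_
      show (x i - c) * (x i - c) = _
      ring
    rw [h1, Finset.sum_add_distrib, Finset.sum_sub_distrib, ← Finset.mul_sum,
      Finset.sum_const, nsmul_eq_mul, hsum_x2, hsum_x, hc_def]
    field_simp
    rw [Finset.card_univ, ← hn_def]
    ring
  have key := quad_lower_aux_wrb A hA τ hτ z
  rw [hzz, hzAz] at key
  -- clear denominators
  have key2 : τ * (s * n - s^2) ≤ -(s^2 * d) := by
    have h := mul_le_mul_of_nonneg_right key hn.le
    have e1 : (τ * (s - s^2/n)) * n = τ * (s * n - s^2) := by field_simp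
    have e2 : (-(s^2 * d) / n) * n = -(s^2 * d) := by field_simp
    rw [e1, e2] at h
    exact h
  have h1τ : 0 < 1 - d / τ := by
    have : d / τ < 0 := div_neg_of_pos_of_neg hd hτneg
    linarith
  rw [le_div_iff₀ h1τ]
  have hτ0 : τ ≠ 0 := ne_of_lt hτneg
  rw [← mul_le_mul_iff_of_pos_right (neg_pos.mpr hτneg)]
  have e3 : s * (1 - d / τ) * (-τ) = s * (d - τ) := by field_simp; ring
  rw [e3]
  by_cases hSc : S.card = 0
  · have : s = 0 := by rw [hs_def, hSc]; norm_num
    rw [this]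
    nlinarith
  · have hs1 : (1:ℝ) ≤ s := by
      rw [hs_def]
      exact_mod_cast Nat.one_le_iff_ne_zero.mpr hSc
    nlinarith [key2, hs1, hd, hn, hτneg]
end

section
/- Under the hypotheses of the weighted ratio bound, if equality holds for an independent set S of size |S| = v/(1 − d/τ) with characteristic vector v_S, then v_S − (|S|/v)·𝟙 is an eigenvector of A with eigenvalue τ, where 𝟙 is the all-ones vector. -/
open Matrix


/-- Equality in the weighted ratio bound: under the hypotheses of the weighted
ratio bound, if an independent set `S` attains the bound
`|S| = v / (1 - d/τ)`, then `v_S - (|S|/v)·𝟙` is a `τ`-eigenvector of `A`,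
where `v_S` is the characteristic vector of `S`. -/
theorem weighted_ratio_bound_equality {V : Type*} [Fintype V] [DecidableEq V]
    (G : SimpleGraph V) (A : Matrix V V ℝ) (d τ : ℝ)
    (hsym : A.IsSymm)
    (hA0 : ∀ i j : V, ¬ G.Adj i j → A i j = 0)
    (hrow : ∀ i : V, ∑ j : V, A i j = d)
    (hτeig : ∃ x : V → ℝ, x ≠ 0 ∧ A.mulVec x = τ • x)
    (hτmin : ∀ (μ : ℝ) (x : V → ℝ), x ≠ 0 → A.mulVec x = μ • x → τ ≤ μ)
    (hτneg : τ < 0) (hd : 0 < d)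
    (S : Finset V) (hS : ∀ i ∈ S, ∀ j ∈ S, ¬ G.Adj i j)
    (hcard : (S.card : ℝ) = (Fintype.card V : ℝ) / (1 - d / τ)) :
    A.mulVec
        ((fun i => if i ∈ S then (1 : ℝ) else 0) -
          ((S.card : ℝ) / (Fintype.card V : ℝ)) • (fun _ => (1 : ℝ))) =
      τ • ((fun i => if i ∈ S then (1 : ℝ) else 0) -
          ((S.card : ℝ) / (Fintype.card V : ℝ)) • (fun _ => (1 : ℝ))) := by
  -- basic facts
  have hne : Nonempty V := by
    obtain ⟨y, hy, -⟩ := hτeig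
    by_contra h
    exact hy (funext fun i => absurd ⟨i⟩ h)
  have hv0 : (0 : ℝ) < (Fintype.card V : ℝ) := by
    exact_mod_cast Fintype.card_pos
  have hvne : (Fintype.card V : ℝ) ≠ 0 := ne_of_gt hv0
  have hτne : τ ≠ 0 := ne_of_lt hτneg
  have hτd : τ - d ≠ 0 := by nlinarith
  set v : ℝ := (Fintype.card V : ℝ) with hv
  set s : ℝ := (S.card : ℝ) with hs
  have hsv : s * (τ - d) = v * τ := by
    have h1 : 1 - d / τ = (τ - d) / τ := by field_simp
    rw [h1] at hcard
    field_simp at hcard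
    linarith [hcard]
  set c : ℝ := s / v with hc
  set x : V → ℝ := (fun i => if i ∈ S then (1 : ℝ) else 0) - c • (fun _ => (1 : ℝ)) with hx
  have hxi : ∀ i, x i = (if i ∈ S then (1 : ℝ) else 0) - c := by
    intro i; simp [hx]
  -- column sums
  have hcol : ∀ j : V, ∑ i : V, A i j = d := by
    intro j
    calc ∑ i : V, A i j = ∑ i : V, A j i := Finset.sum_congr rfl fun i _ => (hsym.apply i j).symm
    _ = d := hrow j
  -- characteristic function sums
  have hchi : (∑ i : V, (if i ∈ S then (1:ℝ) else 0)) = s := by simp [hs]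
  -- the quadratic form vanishes on S
  have hAS : ∀ i ∈ S, ∀ j ∈ S, A i j = 0 := fun i hi j hj => hA0 i j (hS i hi j hj)
  -- compute x ⬝ᵥ A *ᵥ x
  have h1 : x ⬝ᵥ A.mulVec x = -(d * s ^ 2 / v) := by
    have e : x ⬝ᵥ A.mulVec x
        = ∑ i : V, ∑ j : V, ((if i ∈ S then (1:ℝ) else 0) * ((if j ∈ S then (1:ℝ) else 0) * A i j)
            - c * ((if i ∈ S then (1:ℝ) else 0) * A i j)
            - c * (A i j * (if j ∈ S then (1:ℝ) else 0))
            + c * c * A i j) := by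
      simp only [dotProduct, Matrix.mulVec, Finset.mul_sum]
      refine Finset.sum_congr rfl fun i _ => Finset.sum_congr rfl fun j _ => ?_
      rw [hxi i, hxi j]; ring
    rw [e]
    have t1 : ∑ i : V, ∑ j : V, ((if i ∈ S then (1:ℝ) else 0) * ((if j ∈ S then (1:ℝ) else 0) * A i j)) = 0 := by
      refine Finset.sum_eq_zero fun i _ => Finset.sum_eq_zero fun j _ => ?_
      by_cases hi : i ∈ S
      · by_cases hj : j ∈ S
        · simp [hi, hj, hAS i hi j hj]
        · simp [hj]
      · simp [hi]
    have t2 : ∑ i : V, ∑ j : V, ((if i ∈ S then (1:ℝ) else 0) * A i j) = s * d := by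
      calc ∑ i : V, ∑ j : V, ((if i ∈ S then (1:ℝ) else 0) * A i j)
          = ∑ i : V, (if i ∈ S then (1:ℝ) else 0) * d := by
            refine Finset.sum_congr rfl fun i _ => ?_
            rw [← Finset.mul_sum, hrow i]
        _ = s * d := by rw [← Finset.sum_mul, hchi]
    have t3 : ∑ i : V, ∑ j : V, (A i j * (if j ∈ S then (1:ℝ) else 0)) = s * d := by
      rw [Finset.sum_comm]
      calc ∑ j : V, ∑ i : V, (A i j * (if j ∈ S then (1:ℝ) else 0))
          = ∑ j : V, (if j ∈ S then (1:ℝ) else 0) * d := by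
            refine Finset.sum_congr rfl fun j _ => ?_
            rw [← Finset.sum_mul, hcol j, mul_comm]
        _ = s * d := by rw [← Finset.sum_mul, hchi]
    have t4 : ∑ i : V, ∑ j : V, A i j = v * d := by
      calc ∑ i : V, ∑ j : V, A i j = ∑ _i : V, d := Finset.sum_congr rfl fun i _ => hrow i
        _ = v * d := by rw [Finset.sum_const, hv]; simp [nsmul_eq_mul]
    have split : (∑ i : V, ∑ j : V, ((if i ∈ S then (1:ℝ) else 0) * ((if j ∈ S then (1:ℝ) else 0) * A i j)
            - c * ((if i ∈ S then (1:ℝ) else 0) * A i j)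
            - c * (A i j * (if j ∈ S then (1:ℝ) else 0))
            + c * c * A i j))
        = (∑ i : V, ∑ j : V, ((if i ∈ S then (1:ℝ) else 0) * ((if j ∈ S then (1:ℝ) else 0) * A i j)))
          - c * (∑ i : V, ∑ j : V, ((if i ∈ S then (1:ℝ) else 0) * A i j))
          - c * (∑ i : V, ∑ j : V, (A i j * (if j ∈ S then (1:ℝ) else 0)))
          + c * c * (∑ i : V, ∑ j : V, A i j) := by
      simp [Finset.sum_sub_distrib, Finset.sum_add_distrib, Finset.mul_sum]
    rw [split, t1, t2, t3, t4, hc]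
    field_simp
    ring
  -- compute x ⬝ᵥ x
  have h2 : x ⬝ᵥ x = s - s ^ 2 / v := by
    have e : x ⬝ᵥ x = ∑ i : V, ((if i ∈ S then (1:ℝ) else 0) - 2 * c * (if i ∈ S then (1:ℝ) else 0) + c * c) := by
      simp only [dotProduct]
      refine Finset.sum_congr rfl fun i _ => ?_
      rw [hxi i]
      by_cases hi : i ∈ S <;> simp [hi] <;> ring
    rw [e]
    simp only [Finset.sum_add_distrib, Finset.sum_sub_distrib, ← Finset.mul_sum, hchi,
      Finset.sum_const, nsmul_eq_mul, Finset.card_univ, ← hv]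
    rw [hc]
    field_simp
    ring
  have key : x ⬝ᵥ A.mulVec x = τ * (x ⬝ᵥ x) := by
    rw [h1, h2]
    field_simp
    linear_combination s * hsv
  -- spectral argument: B = A - τ•1 is PSD
  have hA : A.IsHermitian := by
    show Aᴴ = A
    simpa using hsym.eq
  set B : Matrix V V ℝ := A - τ • (1 : Matrix V V ℝ) with hB
  have hBh : B.IsHermitian := by
    show Bᴴ = B
    rw [hB]
    simp [Matrix.conjTranspose_sub, hsym.eq]
  have hBmul : ∀ y : V → ℝ, B.mulVec y = A.mulVec y - τ • y := by
    intro y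
    rw [hB, Matrix.sub_mulVec, Matrix.smul_mulVec, Matrix.one_mulVec]
  have hBpsd : B.PosSemidef := by
    refine hBh.posSemidef_iff_eigenvalues_nonneg.mpr fun j => (?_ : (0:ℝ) ≤ _)
    have hw := hBh.mulVec_eigenvectorBasis j
    have hwne : ⇑(hBh.eigenvectorBasis j) ≠ 0 := by
      have := hBh.eigenvectorBasis.orthonormal.ne_zero j
      intro h
      exact this (by ext i; exact congrFun h i)
    have hAw : A.mulVec ⇑(hBh.eigenvectorBasis j)
        = (hBh.eigenvalues j + τ) • ⇑(hBh.eigenvectorBasis j) := by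
      have := hBmul ⇑(hBh.eigenvectorBasis j)
      rw [hw] at this
      have h' := this
      ext i
      have := congrFun h' i
      simp only [Pi.smul_apply, Pi.sub_apply, smul_eq_mul, Pi.add_apply] at this ⊢
      linarith
    have := hτmin _ _ hwne hAw
    linarith
  have hdot : x ⬝ᵥ B.mulVec x = 0 := by
    rw [hBmul x, dotProduct_sub, key, dotProduct_smul]
    simp
  have hzero : B.mulVec x = 0 := by
    refine (hBpsd.dotProduct_mulVec_zero_iff x).mp ?_
    simpa using hdot
  have := hBmul x
  rw [hzero] at this
  have hAx : A.mulVec x = τ • x := by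
    ext i
    have := congrFun this.symm i
    simp only [Pi.zero_apply, Pi.sub_apply, Pi.smul_apply, smul_eq_mul] at this
    simp only [Pi.smul_apply, smul_eq_mul]
    linarith
  exact hAx
end

section
/- For every n ≥ 1, if F ⊆ Sym(n) is a family of permutations such that any two members agree on at least one point (i.e., for all σ,τ ∈ F there exists i with σ(i) = τ(i)), then |F| ≤ (n−1)!. -/
/-- Deza–Frankl: for `n ≥ 1`, an intersecting family of permutations of
`{1,…,n}` (any two members agree on at least one point) has size at most
`(n-1)!`. -/
theorem EKR_permutations (n : ℕ) (hn : 1 ≤ n)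
    (F : Finset (Equiv.Perm (Fin n)))
    (hF : ∀ σ ∈ F, ∀ τ ∈ F, ∃ i : Fin n, σ i = τ i) :
    F.card ≤ (n - 1).factorial := by
  cases n with
  | zero => omega
  | succ m =>
  simp only [Nat.add_sub_cancel]
  set S : Finset (Equiv.Perm (Fin (m + 1))) :=
    Finset.univ.filter (fun π => π 0 = 0) with hS
  have h1 : F.card ≤ S.card := by
    apply Finset.card_le_card_of_injOn
      (fun σ => σ * Equiv.addRight (σ⁻¹ 0))
    · intro σ hσ
      simp [hS, Equiv.Perm.mul_apply]
    · intro σ hσ τ hτ h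
      simp only at h
      obtain ⟨i, hi⟩ := hF σ hσ τ hτ
      set a := σ⁻¹ 0 with ha
      set b := τ⁻¹ 0 with hb
      have h2 : σ i = τ (i - a + b) := by
        have := congrArg (fun π : Equiv.Perm (Fin (m+1)) => π (i - a)) h
        simpa [Equiv.Perm.mul_apply, sub_add_cancel] using this
      rw [hi] at h2
      have h3 : i = i - a + b := τ.injective h2
      have hab : a = b := by open Fin.CommRing in linear_combination h3
      rw [hab] at h
      exact mul_right_cancel h
  have h2 : S.card ≤ m.factorial := by
    have : S.card ≤ (Finset.univ : Finset (Equiv.Perm (Fin m))).card := by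
      apply Finset.card_le_card_of_injOn
        (fun π => (Equiv.Perm.decomposeFin π).2)
      · intro π _; exact Finset.mem_univ _
      · intro σ hσ τ hτ h
        simp only [hS, Finset.mem_coe, Finset.mem_filter] at hσ hτ
        have key : ∀ π : Equiv.Perm (Fin (m+1)),
            (Equiv.Perm.decomposeFin π).1 = π 0 := by
          intro π
          conv_rhs => rw [← Equiv.Perm.decomposeFin.symm_apply_apply π]
          rw [← Equiv.Perm.decomposeFin_symm_apply_zero
            (Equiv.Perm.decomposeFin π).1 (Equiv.Perm.decomposeFin π).2]
        have : Equiv.Perm.decomposeFin σ = Equiv.Perm.decomposeFin τ := by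
          apply Prod.ext
          · rw [key, key, hσ.2, hτ.2]
          · exact h
        exact Equiv.Perm.decomposeFin.injective this
    simpa [Fintype.card_perm] using this
  omega
end
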